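/- Let λ = (λ₁,…,λₙ) be a partition of length at most n and let λ⁽⁰⁾ = (λ₂,…,λₙ) denote its bottom partition. For any real numbers u₁,…,u_{n−1}, x, y, the identity (x−y)·S_λ(U,x,y)·S_{λ⁽⁰⁾}(U) = x·S_λ(U,x)·S_{λ⁽⁰⁾}(U,y) − y·S_λ(U,y)·S_{λ⁽⁰⁾}(U,x) holds, where U = (u₁,…,u_{n−1}). -/

import Mathlib

/-- Complete homogeneous symmetric polynomial of degree `m` in `n` real variables. -/
noncomputable def hh (n m : ℕ) (u : Fin n → ℝ) : ℝ :=
  ∑ c ∈ Finset.Nat.antidiagonalTuple n m, ∏ i, u i ^ c i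

/-- `hh` extended by `0` to negative degrees. -/
noncomputable def hZ (n : ℕ) (m : ℤ) (u : Fin n → ℝ) : ℝ :=
  if 0 ≤ m then hh n m.toNat u else 0

/-- Schur polynomial of the partition `lam` (of length at most `l`), evaluated at `k`
real variables, defined via the Jacobi–Trudi determinant. -/
noncomputable def schur {l : ℕ} (lam : Fin l → ℕ) {k : ℕ} (u : Fin k → ℝ) : ℝ :=
  Matrix.det (Matrix.of fun i j : Fin l => hZ k ((lam i : ℤ) - (i : ℤ) + (j : ℤ)) u)

lemma hh_zero (n : ℕ) (u : Fin n → ℝ) : hh n 0 u = 1 := by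
  simp [hh, Finset.Nat.antidiagonalTuple_zero_right]

lemma hh_comp_perm (n m : ℕ) (u : Fin n → ℝ) (e : Equiv.Perm (Fin n)) :
    hh n m (u ∘ e) = hh n m u := by
  unfold hh
  refine Finset.sum_nbij' (fun c => c ∘ e.symm) (fun c => c ∘ e) ?_ ?_ ?_ ?_ ?_
  · intro c hc
    rw [Finset.Nat.mem_antidiagonalTuple] at hc ⊢
    rw [← hc]
    exact Equiv.sum_comp e.symm c
  · intro c hc
    rw [Finset.Nat.mem_antidiagonalTuple] at hc ⊢
    rw [← hc]
    exact Equiv.sum_comp e c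
  · intro c _; funext i; simp
  · intro c _; funext i; simp
  · intro c _
    calc ∏ i, (u ∘ e) i ^ c i = ∏ i, u (e i) ^ (c ∘ e.symm) (e i) := by
          refine Finset.prod_congr rfl fun i _ => by simp
      _ = ∏ i, u i ^ (c ∘ e.symm) i := Equiv.prod_comp e fun i => u i ^ (c ∘ e.symm) i

lemma hh_cons (n md : ℕ) (z : ℝ) (u : Fin n → ℝ) :
    hh (n+1) md (Fin.cons z u) = ∑ p ∈ Finset.HasAntidiagonal.antidiagonal md, z ^ p.1 * hh n p.2 u := by
  unfold hh
  simp_rw [Finset.mul_sum]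
  rw [Finset.sum_sigma']
  refine Finset.sum_nbij'
    (fun c => (⟨(c 0, ∑ i, Fin.tail c i), Fin.tail c⟩ : (_ : ℕ × ℕ) × (Fin n → ℕ)))
    (fun pc => Fin.cons pc.1.1 pc.2) ?_ ?_ ?_ ?_ ?_
  · intro c hc
    rw [Finset.Nat.mem_antidiagonalTuple] at hc
    rw [Finset.mem_sigma, Finset.HasAntidiagonal.mem_antidiagonal]
    refine ⟨by rw [← hc]; exact (Fin.sum_univ_succ c).symm, ?_⟩
    rw [Finset.Nat.mem_antidiagonalTuple]
  · intro pc hpc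
    rw [Finset.mem_sigma, Finset.HasAntidiagonal.mem_antidiagonal, Finset.Nat.mem_antidiagonalTuple] at hpc
    rw [Finset.Nat.mem_antidiagonalTuple, Fin.sum_univ_succ]
    simp [hpc.2, hpc.1]
  · intro c _
    exact Fin.cons_self_tail c
  · intro pc hpc
    rw [Finset.mem_sigma, Finset.HasAntidiagonal.mem_antidiagonal, Finset.Nat.mem_antidiagonalTuple] at hpc
    refine Sigma.ext ?_ (heq_of_eq ?_)
    · simp [hpc.2]
    · simp
  · intro c _
    rw [Fin.prod_univ_succ]
    simp [Fin.tail]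

lemma hh_cons_rec (n md : ℕ) (z : ℝ) (u : Fin n → ℝ) :
    hh (n+1) (md+1) (Fin.cons z u) = hh n (md+1) u + z * hh (n+1) md (Fin.cons z u) := by
  rw [hh_cons, hh_cons, Finset.Nat.antidiagonal_succ, Finset.sum_cons, Finset.sum_map,
    Finset.mul_sum]
  simp [pow_succ, mul_comm, mul_assoc, mul_left_comm]

lemma hh_snoc_rec (n md : ℕ) (z : ℝ) (u : Fin n → ℝ) :
    hh (n+1) (md+1) (Fin.snoc u z) = hh n (md+1) u + z * hh (n+1) md (Fin.snoc u z) := by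
  have h : (Fin.snoc u z : Fin (n+1) → ℝ) = (Fin.cons z u) ∘ (finRotate (n+1)) := by
    rw [Fin.snoc_eq_cons_rotate]; rfl
  rw [h, hh_comp_perm, hh_comp_perm, hh_cons_rec]

lemma hZ_rec (n : ℕ) (d : ℤ) (u : Fin n → ℝ) (z : ℝ) :
    hZ (n+1) d (Fin.snoc u z) = hZ n d u + z * hZ (n+1) (d-1) (Fin.snoc u z) := by
  unfold hZ
  rcases lt_trichotomy d 0 with h | h | h
  · rw [if_neg (by omega), if_neg (by omega), if_neg (by omega)]; ring
  · subst h
    rw [if_pos le_rfl, if_pos le_rfl, if_neg (by omega)]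
    simp [hh_zero]
  · obtain ⟨k, rfl⟩ : ∃ k : ℕ, d = (k : ℤ) + 1 := by
      refine ⟨(d - 1).toNat, by omega⟩
    rw [if_pos (by omega), if_pos (by omega), if_pos (by omega)]
    have h1 : ((k : ℤ) + 1).toNat = k + 1 := by omega
    have h2 : ((k : ℤ) + 1 - 1).toNat = k := by omega
    rw [h1, h2, hh_snoc_rec]


open Matrix

lemma det_colstep (n j₀ : ℕ) (z : ℝ) (C F : Fin n → Fin n → ℝ)
    (hrel : ∀ j : Fin n, j₀ < (j:ℕ) →
      C j = fun i => F j i + z * C ⟨(j:ℕ)-1, (Nat.sub_le _ _).trans_lt j.isLt⟩ i) :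
    Matrix.det (Matrix.of fun i j => C j i)
      = Matrix.det (Matrix.of fun i (j : Fin n) => if (j:ℕ) ≤ j₀ then C j i else F j i) := by
  have key : ∀ s : ℕ,
      Matrix.det (Matrix.of fun i (j : Fin n) => if (j:ℕ) ≤ j₀ + s then C j i else F j i)
        = Matrix.det (Matrix.of fun i (j : Fin n) => if (j:ℕ) ≤ j₀ then C j i else F j i) := by
    intro s
    induction s with
    | zero => rfl
    | succ s ih =>
      simp only [← Nat.add_assoc]
      rw [← ih]
      by_cases hs : j₀ + s + 1 < n
      · set jj : Fin n := ⟨j₀ + s + 1, hs⟩ with hjj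
        set jp : Fin n := ⟨j₀ + s, Nat.lt_of_succ_lt hs⟩ with hjp
        set A : Matrix (Fin n) (Fin n) ℝ :=
          Matrix.of fun i (j : Fin n) => if (j:ℕ) ≤ j₀ + s + 1 then C j i else F j i with hA
        have hne : jj ≠ jp := by simp [hjj, hjp, Fin.ext_iff]
        have step : (Matrix.of fun i (j : Fin n) => if (j:ℕ) ≤ j₀ + s then C j i else F j i)
            = A.updateCol jj (fun k => A k jj + (-z) • A k jp) := by
          funext i j
          rw [Matrix.updateCol_apply]
          by_cases hj : j = jj
          · subst hj
            have h1 : ¬ ((jj:ℕ) ≤ j₀ + s) := by simp [hjj]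
            have h2 : ((jj:ℕ) ≤ j₀ + s + 1) := by simp [hjj]
            have h3 : ((jp:ℕ) ≤ j₀ + s + 1) := by simp only [hjp]; omega
            simp only [Matrix.of_apply, hA, if_pos h2, if_pos h3, if_neg h1, if_pos rfl]
            have hrel' := hrel jj (by simp only [hjj]; omega)
            have hj1 : (⟨(jj:ℕ)-1, (Nat.sub_le _ _).trans_lt jj.isLt⟩ : Fin n) = jp := by
              simp [hjj, hjp]
            rw [hrel']
            simp only [hj1, if_true, smul_eq_mul]
            ring
          · simp only [Matrix.of_apply, if_neg hj, hA]
            have hiff : ((j:ℕ) ≤ j₀ + s) ↔ ((j:ℕ) ≤ j₀ + s + 1) := by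
              constructor
              · omega
              · intro h
                rcases Nat.lt_or_ge (j:ℕ) (j₀ + s + 1) with h' | h'
                · omega
                · exfalso
                  exact hj (Fin.ext (by simp only [hjj]; omega))
            by_cases hle : (j:ℕ) ≤ j₀ + s
            · rw [if_pos hle, if_pos (hiff.mp hle)]
            · rw [if_neg hle, if_neg (fun hc => hle (hiff.mpr hc))]
        rw [step, Matrix.det_updateCol_add_smul_self A hne (-z)]
      · congr 1
        funext i j
        have h1 : (j:ℕ) ≤ j₀ + s := by have := j.isLt; omega
        simp only [Matrix.of_apply, if_pos h1, if_pos (by omega : (j:ℕ) ≤ j₀ + s + 1)]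
  have hn := key n
  have hC : (Matrix.of fun i (j : Fin n) => if (j:ℕ) ≤ j₀ + n then C j i else F j i)
      = Matrix.of fun i (j : Fin n) => C j i := by
    funext i j
    simp only [Matrix.of_apply, if_pos (by have := j.isLt; omega : (j:ℕ) ≤ j₀ + n)]
  rw [← hC, hn]

lemma det_syzygy (n : ℕ) (w : Fin (n+2) → Fin (n+1) → ℝ) (r : Fin (n+1)) :
    ∑ k : Fin (n+2), (-1)^(k:ℕ)
        * Matrix.det (Matrix.of fun i (j : Fin (n+1)) => w (k.succAbove j) i) * w k r = 0 := by
  set N : Matrix (Fin (n+2)) (Fin (n+2)) ℝ :=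
    Matrix.of fun i j => Fin.cases (w j r) (fun i' => w j i') i with hN
  have h0 : N.det = 0 := by
    refine Matrix.det_zero_of_row_eq (i := 0) (j := r.succ) (Fin.succ_ne_zero r).symm ?_
    funext j
    simp [hN]
  rw [Matrix.det_succ_row_zero] at h0
  rw [← h0]
  refine Finset.sum_congr rfl fun k _ => ?_
  have hsub : (N.submatrix Fin.succ k.succAbove)
      = Matrix.of fun i (j : Fin (n+1)) => w (k.succAbove j) i := by
    funext i j
    simp [hN, Matrix.submatrix_apply]
  rw [hsub]
  have hn0 : N 0 k = w k r := by simp [hN]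
  rw [hn0]
  ring

lemma det_border (n : ℕ) (w : Fin n → Fin (n+1) → ℝ) :
    Matrix.det (Matrix.of fun i (j : Fin (n+1)) =>
        (Fin.cons (fun i' => if i' = 0 then (1:ℝ) else 0) w : Fin (n+1) → Fin (n+1) → ℝ) j i)
      = Matrix.det (Matrix.of fun (i j : Fin n) => w j i.succ) := by
  rw [Matrix.det_succ_column_zero]
  rw [Finset.sum_eq_single 0]
  · have e1 : ((-1:ℝ))^((0:Fin (n+1)):ℕ) = 1 := by norm_num
    have e2 : (Matrix.of fun i (j : Fin (n+1)) =>
        (Fin.cons (fun i' => if i' = 0 then (1:ℝ) else 0) w : Fin (n+1) → Fin (n+1) → ℝ) j i) 0 0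
        = 1 := by simp
    rw [e1, e2, one_mul, one_mul]
    refine congrArg Matrix.det ?_
    funext i j
    simp [Matrix.submatrix_apply, Fin.succAbove_zero]
  · intro b _ hb
    simp only [Matrix.of_apply, Fin.cons_zero, if_neg hb]
    ring
  · intro h
    exact absurd (Finset.mem_univ _) h


lemma val_succAbove {n : ℕ} (k : Fin (n+2)) (j : Fin (n+1)) :
    ((k.succAbove j):ℕ) = if (j:ℕ) < (k:ℕ) then (j:ℕ) else (j:ℕ)+1 := by
  rw [Fin.succAbove]
  split_ifs with h1 h2 h3
  · simp
  · exfalso; rw [Fin.lt_iff_val_lt_val] at h1; simp at h1; omega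
  · exfalso; rw [Fin.lt_iff_val_lt_val] at h1; simp at h1; omega
  · simp

noncomputable def Gmat (N : ℕ) (v : ℕ → Fin (N+2) → ℝ) (a b : Fin (N+2) → ℝ) :
    Matrix (Fin (N+2)) (Fin (N+2)) ℝ :=
  Matrix.of fun i (j : Fin (N+2)) =>
    (if (j:ℕ) = 0 then a else if (j:ℕ) = 1 then b else v (j:ℕ)) i

noncomputable def Gd (N : ℕ) (v : ℕ → Fin (N+2) → ℝ) (a b : Fin (N+2) → ℝ) : ℝ :=
  (Gmat N v a b).det

lemma Gmat_eq_update_right (N : ℕ) (v : ℕ → Fin (N+2) → ℝ) (a b : Fin (N+2) → ℝ) :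
    Gmat N v a b = (Gmat N v a 0).updateCol 1 b := by
  funext i j
  rw [Matrix.updateCol_apply]
  by_cases hj : j = 1
  · subst hj
    simp [Gmat, Fin.val_one]
  · have hv : (j:ℕ) ≠ 1 := fun h => hj (Fin.ext (by simp [h, Fin.val_one]))
    simp only [Gmat, Matrix.of_apply, if_neg hj, if_neg hv]

lemma Gmat_eq_update_left (N : ℕ) (v : ℕ → Fin (N+2) → ℝ) (a b : Fin (N+2) → ℝ) :
    Gmat N v a b = (Gmat N v 0 b).updateCol 0 a := by
  funext i j
  rw [Matrix.updateCol_apply]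
  by_cases hj : j = 0
  · subst hj
    simp [Gmat]
  · have hv : (j:ℕ) ≠ 0 := fun h => hj (Fin.ext (by simp [h]))
    simp only [Gmat, Matrix.of_apply, if_neg hj, if_neg hv]

noncomputable def GLf (N : ℕ) (v : ℕ → Fin (N+2) → ℝ) (a : Fin (N+2) → ℝ) :
    (Fin (N+2) → ℝ) →ₗ[ℝ] ℝ where
  toFun b := Gd N v a b
  map_add' b b' := by
    simp only [Gd]
    rw [Gmat_eq_update_right N v a (b + b'), Matrix.det_updateCol_add,
      ← Gmat_eq_update_right N v a b, ← Gmat_eq_update_right N v a b']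
  map_smul' s b := by
    simp only [Gd, RingHom.id_apply, smul_eq_mul]
    rw [Gmat_eq_update_right N v a (s • b), Matrix.det_updateCol_smul,
      ← Gmat_eq_update_right N v a b]

lemma Gd_add_right (N : ℕ) (v : ℕ → Fin (N+2) → ℝ) (a b b' : Fin (N+2) → ℝ) :
    Gd N v a (b + b') = Gd N v a b + Gd N v a b' := (GLf N v a).map_add b b'

lemma Gd_smul_right (N : ℕ) (v : ℕ → Fin (N+2) → ℝ) (a : Fin (N+2) → ℝ) (s : ℝ)
    (b : Fin (N+2) → ℝ) : Gd N v a (s • b) = s * Gd N v a b := (GLf N v a).map_smul s b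

lemma Gd_add_left (N : ℕ) (v : ℕ → Fin (N+2) → ℝ) (a a' b : Fin (N+2) → ℝ) :
    Gd N v (a + a') b = Gd N v a b + Gd N v a' b := by
  simp only [Gd]
  rw [Gmat_eq_update_left N v (a + a') b, Matrix.det_updateCol_add,
    ← Gmat_eq_update_left N v a b, ← Gmat_eq_update_left N v a' b]

lemma Gd_smul_left (N : ℕ) (v : ℕ → Fin (N+2) → ℝ) (s : ℝ) (a b : Fin (N+2) → ℝ) :
    Gd N v (s • a) b = s * Gd N v a b := by
  simp only [Gd]
  rw [Gmat_eq_update_left N v (s • a) b, Matrix.det_updateCol_smul,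
    ← Gmat_eq_update_left N v a b]

lemma Gd_alt (N : ℕ) (v : ℕ → Fin (N+2) → ℝ) (a : Fin (N+2) → ℝ) : Gd N v a a = 0 := by
  refine Matrix.det_zero_of_column_eq (i := 0) (j := 1) ?_ fun k => ?_
  · intro h
    have := congrArg Fin.val h
    simp [Fin.val_one] at this
  · simp [Gmat, Fin.val_one]

lemma Gd_swap (N : ℕ) (v : ℕ → Fin (N+2) → ℝ) (a b : Fin (N+2) → ℝ) :
    Gd N v a b = - Gd N v b a := by
  have h := Gd_alt N v (a + b)
  rw [Gd_add_left, Gd_add_right, Gd_add_right, Gd_alt, Gd_alt] at h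
  linarith

lemma Gd_v (N : ℕ) (v : ℕ → Fin (N+2) → ℝ) (a : Fin (N+2) → ℝ) (t : ℕ)
    (h2 : 2 ≤ t) (hN : t ≤ N+1) : Gd N v a (v t) = 0 := by
  refine Matrix.det_zero_of_column_eq (i := 1) (j := ⟨t, by omega⟩) ?_ fun k => ?_
  · intro h
    have := congrArg Fin.val h
    simp [Fin.val_one] at this
    omega
  · simp only [Gmat, Matrix.of_apply, Fin.val_one]
    have ht0 : t ≠ 0 := by omega
    have ht1 : t ≠ 1 := by omega
    norm_num [ht0, ht1]
    exact congrFun (if_neg one_ne_zero) k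

lemma GLf_apply (N : ℕ) (v : ℕ → Fin (N+2) → ℝ) (a b : Fin (N+2) → ℝ) :
    GLf N v a b = Gd N v a b := rfl

lemma Gd_pluecker (N : ℕ) (v : ℕ → Fin (N+2) → ℝ) (a b c d : Fin (N+2) → ℝ) :
    Gd N v c d * Gd N v a b - Gd N v b d * Gd N v a c + Gd N v b c * Gd N v a d = 0 := by
  classical
  set z : Fin (N+3) → Fin (N+2) → ℝ := fun k =>
    if (k:ℕ) = 0 then b else if (k:ℕ) = 1 then c else if (k:ℕ) = 2 then d
    else v ((k:ℕ)-1) with hz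
  set Dk : Fin (N+3) → ℝ := fun k =>
    (-1)^(k:ℕ) * Matrix.det (Matrix.of fun i (j : Fin (N+2)) => z (k.succAbove j) i) with hDk
  have hsum : ∑ k : Fin (N+3), Dk k • z k = 0 := by
    funext r
    rw [Finset.sum_apply]
    simp only [Pi.smul_apply, smul_eq_mul]
    have hs := det_syzygy (N+1) z r
    calc ∑ k : Fin (N+3), Dk k * z k r
        = ∑ k : Fin (N+3), (-1)^(k:ℕ)
            * Matrix.det (Matrix.of fun i (j : Fin (N+2)) => z (k.succAbove j) i) * z k r := by
          refine Finset.sum_congr rfl fun k _ => by simp only [hDk]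
      _ = 0 := hs
  have hL := congrArg (GLf N v a) hsum
  rw [map_sum, map_zero] at hL
  simp only [_root_.map_smul, smul_eq_mul, GLf_apply] at hL
  -- identify the three leading determinants
  have hval2 : ((2 : Fin (N+3)) : ℕ) = 2 := by
    rw [Fin.val_two]
  have hz0 : z 0 = b := by simp [hz]
  have hz1 : z 1 = c := by simp [hz, Fin.val_one]
  have hz2 : z 2 = d := by
    simp [hz, hval2]
    rw [if_neg two_ne_zero, if_neg (by rw [Nat.mod_eq_of_lt (by omega)]; omega)]
  have h0 : (Matrix.of fun i (j : Fin (N+2)) => z ((0 : Fin (N+3)).succAbove j) i)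
      = Gmat N v c d := by
    funext i j
    have hv := val_succAbove (0 : Fin (N+3)) j
    simp only [Fin.val_zero, Nat.not_lt_zero, if_false] at hv
    simp only [Matrix.of_apply, hz, Gmat, hv]
    by_cases hj0 : (j:ℕ) = 0
    · simp [hj0]
    · by_cases hj1 : (j:ℕ) = 1
      · simp [hj1]
      · have e1 : (j:ℕ) + 1 ≠ 0 := by omega
        have e2 : (j:ℕ) + 1 ≠ 1 := by omega
        have e3 : (j:ℕ) + 1 ≠ 2 := by omega
        simp [hj0, hj1, e1, e2, e3]
  have h1 : (Matrix.of fun i (j : Fin (N+2)) => z ((1 : Fin (N+3)).succAbove j) i)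
      = Gmat N v b d := by
    funext i j
    have hv := val_succAbove (1 : Fin (N+3)) j
    rw [Fin.val_one] at hv
    simp only [Matrix.of_apply, hz, Gmat, hv]
    by_cases hj0 : (j:ℕ) = 0
    · simp [hj0]
    · have hlt : ¬ ((j:ℕ) < 1) := by omega
      by_cases hj1 : (j:ℕ) = 1
      · have e2 : (j:ℕ) + 1 = 2 := by omega
        simp [hlt, hj0, hj1, e2]
      · have e1 : (j:ℕ) + 1 ≠ 0 := by omega
        have e2 : (j:ℕ) + 1 ≠ 1 := by omega
        have e3 : (j:ℕ) + 1 ≠ 2 := by omega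
        simp [hlt, hj0, hj1, e1, e2, e3]
  have h2 : (Matrix.of fun i (j : Fin (N+2)) => z ((2 : Fin (N+3)).succAbove j) i)
      = Gmat N v b c := by
    funext i j
    have hv := val_succAbove (2 : Fin (N+3)) j
    rw [hval2] at hv
    simp only [Matrix.of_apply, hz, Gmat, hv]
    by_cases hj0 : (j:ℕ) = 0
    · simp [hj0]
    · by_cases hj1 : (j:ℕ) = 1
      · simp [hj0, hj1]
      · have hlt : ¬ ((j:ℕ) < 2) := by omega
        have e1 : (j:ℕ) + 1 ≠ 0 := by omega
        have e2 : (j:ℕ) + 1 ≠ 1 := by omega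
        have e3 : (j:ℕ) + 1 ≠ 2 := by omega
        simp [hlt, hj0, hj1, e1, e2, e3]
  -- peel off three terms
  rw [Fin.sum_univ_succ, Fin.sum_univ_succ, Fin.sum_univ_succ] at hL
  have htail : ∑ k : Fin N, Dk k.succ.succ.succ * Gd N v a (z k.succ.succ.succ) = 0 := by
    refine Finset.sum_eq_zero fun k _ => ?_
    have hvalk : ((k.succ.succ.succ : Fin (N+3)) : ℕ) = (k:ℕ) + 3 := by
      simp [Fin.val_succ]
    have hzk : z k.succ.succ.succ = v ((k:ℕ) + 2) := by
      simp only [hz, hvalk]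
      have e1 : (k:ℕ) + 3 ≠ 0 := by omega
      have e2 : (k:ℕ) + 3 ≠ 1 := by omega
      have e3 : (k:ℕ) + 3 ≠ 2 := by omega
      simp [e1, e2, e3]
    rw [hzk, Gd_v N v a ((k:ℕ)+2) (by omega) (by omega), mul_zero]
  rw [htail] at hL
  have hone : (((0:Fin (N+2)).succ : Fin (N+3)) : ℕ) = 1 := by simp
  have htwo : (((0:Fin (N+1)).succ.succ : Fin (N+3)) : ℕ) = 2 := by simp
  have hD0 : Dk 0 = Gd N v c d := by
    rw [hDk]
    simp only [Fin.val_zero, pow_zero, one_mul]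
    rw [h0]
    rfl
  have hD1 : Dk (0:Fin (N+2)).succ = - Gd N v b d := by
    rw [hDk]
    have : ((0:Fin (N+2)).succ : Fin (N+3)) = 1 := by
      refine Fin.ext ?_
      rw [hone, Fin.val_one]
    rw [this]
    simp only [Fin.val_one, pow_one]
    rw [h1]
    simp [Gd]
  have hD2 : Dk (0:Fin (N+1)).succ.succ = Gd N v b c := by
    simp only [hDk]
    have h22 : ((0:Fin (N+1)).succ.succ : Fin (N+3)) = 2 := by
      refine Fin.ext ?_
      rw [htwo, hval2]
    rw [h22]
    simp only [hval2]
    norm_num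
    rw [h2]
    rfl
  have hzz1 : z (0:Fin (N+2)).succ = c := by
    have : ((0:Fin (N+2)).succ : Fin (N+3)) = 1 := Fin.ext (by rw [hone, Fin.val_one])
    rw [this, hz1]
  have hzz2 : z (0:Fin (N+1)).succ.succ = d := by
    have : ((0:Fin (N+1)).succ.succ : Fin (N+3)) = 2 := Fin.ext (by rw [htwo, hval2])
    rw [this, hz2]
  rw [hz0, hzz1, hzz2, hD0, hD1, hD2] at hL
  linarith


lemma snoc_swap (n : ℕ) (u : Fin n → ℝ) (x y : ℝ) :
    (Fin.snoc (Fin.snoc u x) y : Fin (n+2) → ℝ)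
      = (Fin.snoc (Fin.snoc u y) x : Fin (n+2) → ℝ)
          ∘ (Equiv.swap (Fin.last (n+1)) (Fin.castSucc (Fin.last n))) := by
  funext i
  induction i using Fin.lastCases with
  | last =>
    simp only [Function.comp_apply, Equiv.swap_apply_left, Fin.snoc_last, Fin.snoc_castSucc]
  | cast j =>
    induction j using Fin.lastCases with
    | last =>
      simp only [Function.comp_apply, Equiv.swap_apply_right, Fin.snoc_last, Fin.snoc_castSucc]
    | cast k =>
      have h1 : Fin.castSucc (Fin.castSucc k) ≠ Fin.last (n+1) := by
        intro h
        have := congrArg Fin.val h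
        simp at this
        omega
      have h2 : Fin.castSucc (Fin.castSucc k) ≠ Fin.castSucc (Fin.last n) := by
        intro h
        have := congrArg Fin.val h
        simp at this
        omega
      simp only [Function.comp_apply, Equiv.swap_apply_of_ne_of_ne h1 h2, Fin.snoc_castSucc]

lemma hZ_swapxy (n : ℕ) (d : ℤ) (u : Fin n → ℝ) (x y : ℝ) :
    hZ (n+2) d (Fin.snoc (Fin.snoc u x) y) = hZ (n+2) d (Fin.snoc (Fin.snoc u y) x) := by
  unfold hZ
  by_cases h : 0 ≤ d
  · rw [if_pos h, if_pos h, snoc_swap, hh_comp_perm]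
  · rw [if_neg h, if_neg h]

lemma hZ_cross (n : ℕ) (d : ℤ) (u : Fin n → ℝ) (x y : ℝ) :
    (x - y) * hZ (n+2) d (Fin.snoc (Fin.snoc u x) y)
      = x * hZ (n+1) d (Fin.snoc u x) - y * hZ (n+1) d (Fin.snoc u y) := by
  have h1 := hZ_rec (n+1) d (Fin.snoc u y) x
  have h2 := hZ_rec (n+1) d (Fin.snoc u x) y
  rw [← hZ_swapxy n d u x y, ← hZ_swapxy n (d-1) u x y] at h1
  linear_combination x * h2 - y * h1

/-- For a partition `λ` of length at most `m+1`, with bottom partition `λ⁽⁰⁾ = (λ₂,…)`: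
`(x-y)·S_λ(U,x,y)·S_{λ⁽⁰⁾}(U) = x·S_λ(U,x)·S_{λ⁽⁰⁾}(U,y) − y·S_λ(U,y)·S_{λ⁽⁰⁾}(U,x)`. -/
theorem schur_condensation (m : ℕ) (lam : Fin (m + 1) → ℕ) (hlam : Antitone lam)
    (U : Fin m → ℝ) (x y : ℝ) :
    (x - y) * schur lam (Fin.snoc (Fin.snoc U x : Fin (m + 1) → ℝ) y : Fin (m + 2) → ℝ)
        * schur (fun i : Fin m => lam i.succ) U
      = x * schur lam (Fin.snoc U x : Fin (m + 1) → ℝ)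
            * schur (fun i : Fin m => lam i.succ) (Fin.snoc U y : Fin (m + 1) → ℝ)
        - y * schur lam (Fin.snoc U y : Fin (m + 1) → ℝ)
            * schur (fun i : Fin m => lam i.succ) (Fin.snoc U x : Fin (m + 1) → ℝ) := by
  clear hlam
  cases m with
  | zero =>
    have h0 : ∀ (k : ℕ) (u : Fin k → ℝ), schur (fun i : Fin 0 => lam i.succ) u = 1 := by
      intro k u
      simp [schur, Matrix.det_isEmpty]
    have h1 : ∀ (k : ℕ) (u : Fin k → ℝ), schur lam u = hZ k ((lam 0 : ℤ)) u := by
      intro k u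
      rw [schur, Matrix.det_fin_one]
      norm_num
    rw [h0, h0, h0, h1, h1, h1]
    have hc := hZ_cross 0 ((lam 0 : ℤ)) U x y
    linear_combination hc
  | succ m' =>
    set ov : Fin (m'+2) → ℤ := fun i => (lam i : ℤ) - (i:ℕ) with hov
    set vv : ℕ → Fin (m'+2) → ℝ := fun t i => hZ (m'+1) (ov i + t) U with hvv
    set cX : Fin (m'+2) → ℝ := fun i => hZ (m'+2) (ov i) (Fin.snoc U x) with hcX
    set cY : Fin (m'+2) → ℝ := fun i => hZ (m'+2) (ov i) (Fin.snoc U y) with hcY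
    set cXY : Fin (m'+2) → ℝ :=
      (fun i => hZ (m'+3) (ov i) (Fin.snoc (Fin.snoc U x) y)) with hcXY
    set c1X : Fin (m'+2) → ℝ := fun i => hZ (m'+2) (ov i + 1) (Fin.snoc U x) with hc1X
    set e0 : Fin (m'+2) → ℝ := fun i' => if i' = 0 then (1:ℝ) else 0 with he0
    -- (1) one-variable Schur reduction
    have hgenA : ∀ z : ℝ, schur lam (Fin.snoc U z)
        = Gd m' vv (fun i => hZ (m'+2) (ov i) (Fin.snoc U z)) (vv 1) := by
      intro z
      rw [schur]
      show (Matrix.of fun i j : Fin (m'+2) =>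
          hZ (m'+2) ((lam i : ℤ) - (i:ℤ) + (j:ℤ)) (Fin.snoc U z)).det
        = Gd m' vv (fun i => hZ (m'+2) (ov i) (Fin.snoc U z)) (vv 1)
      have step1 := det_colstep (m'+2) 0 z
        (fun j i => hZ (m'+2) (ov i + (j:ℕ)) (Fin.snoc U z))
        (fun j i => vv (j:ℕ) i)
        (by
          intro j hj
          funext i
          simp only []
          have harg : ov i + (((j:ℕ):ℤ)) - 1 = ov i + ((((j:ℕ) - 1 : ℕ)):ℤ) := by omega
          have hr := hZ_rec (m'+1) (ov i + ((j:ℕ):ℤ)) U z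
          rw [harg] at hr
          rw [hr])
      have hm1 : (Matrix.of fun i j : Fin (m'+2) =>
            hZ (m'+2) ((lam i : ℤ) - (i:ℤ) + (j:ℤ)) (Fin.snoc U z))
          = (Matrix.of fun i (j : Fin (m'+2)) =>
              (fun (j' : Fin (m'+2)) i' => hZ (m'+2) (ov i' + ((j':ℕ):ℤ)) (Fin.snoc U z)) j i) := by
        funext i j
        simp [hov]
      rw [hm1, step1]
      rw [show Gd m' vv (fun i => hZ (m'+2) (ov i) (Fin.snoc U z)) (vv 1)
          = (Gmat m' vv (fun i => hZ (m'+2) (ov i) (Fin.snoc U z)) (vv 1)).det from rfl]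
      refine congrArg Matrix.det ?_
      funext i j
      simp only [Matrix.of_apply, Gmat, Nat.le_zero]
      by_cases hj0 : (j:ℕ) = 0
      · rw [if_pos hj0, if_pos hj0]
        norm_num [hj0]
      · rw [if_neg hj0, if_neg hj0]
        by_cases hj1 : (j:ℕ) = 1
        · rw [if_pos hj1, hj1]
        · rw [if_neg hj1]
    -- (2) two-variable Schur reduction
    have hXY : schur lam
          (Fin.snoc (Fin.snoc U x : Fin (m'+1+1) → ℝ) y : Fin (m'+1+2) → ℝ)
        = Gd m' vv cXY c1X := by
      rw [schur]
      show (Matrix.of fun i j : Fin (m'+2) =>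
          hZ (m'+3) ((lam i : ℤ) - (i:ℤ) + (j:ℤ)) (Fin.snoc (Fin.snoc U x) y)).det
        = Gd m' vv cXY c1X
      have step1 := det_colstep (m'+2) 0 y
        (fun j i => hZ (m'+3) (ov i + (j:ℕ)) (Fin.snoc (Fin.snoc U x) y))
        (fun j i => hZ (m'+2) (ov i + (j:ℕ)) (Fin.snoc U x))
        (by
          intro j hj
          funext i
          simp only []
          have harg : ov i + (((j:ℕ):ℤ)) - 1 = ov i + ((((j:ℕ) - 1 : ℕ)):ℤ) := by omega
          have hr := hZ_rec (m'+2) (ov i + ((j:ℕ):ℤ)) (Fin.snoc U x) y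
          rw [harg] at hr
          rw [hr])
      have step2 := det_colstep (m'+2) 1 x
        (fun j i => if (j:ℕ) ≤ 0 then hZ (m'+3) (ov i + (j:ℕ)) (Fin.snoc (Fin.snoc U x) y)
          else hZ (m'+2) (ov i + (j:ℕ)) (Fin.snoc U x))
        (fun j i => vv (j:ℕ) i)
        (by
          intro j hj
          funext i
          simp only []
          rw [if_neg (by omega), if_neg (by omega)]
          have harg : ov i + (((j:ℕ):ℤ)) - 1 = ov i + ((((j:ℕ) - 1 : ℕ)):ℤ) := by omega
          have hr := hZ_rec (m'+1) (ov i + ((j:ℕ):ℤ)) U x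
          rw [harg] at hr
          rw [hr])
      have hm1 : (Matrix.of fun i j : Fin (m'+2) =>
            hZ (m'+3) ((lam i : ℤ) - (i:ℤ) + (j:ℤ)) (Fin.snoc (Fin.snoc U x) y))
          = (Matrix.of fun i (j : Fin (m'+2)) =>
              (fun (j' : Fin (m'+2)) i' =>
                hZ (m'+3) (ov i' + ((j':ℕ):ℤ)) (Fin.snoc (Fin.snoc U x) y)) j i) := by
        funext i j
        simp [hov]
      rw [hm1, step1, step2]
      rw [show Gd m' vv cXY c1X = (Gmat m' vv cXY c1X).det from rfl]
      refine congrArg Matrix.det ?_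
      funext i j
      simp only [Matrix.of_apply, Gmat]
      by_cases hj0 : (j:ℕ) = 0
      · rw [if_pos (by omega : (j:ℕ) ≤ 1), if_pos (by omega : (j:ℕ) ≤ 0), if_pos hj0, hcXY]
        norm_num [hj0]
      · by_cases hj1 : (j:ℕ) = 1
        · rw [if_pos (by omega : (j:ℕ) ≤ 1), if_neg (by omega : ¬ (j:ℕ) ≤ 0), if_neg hj0,
            if_pos hj1, hc1X, hj1]
          norm_num
        · rw [if_neg (by omega : ¬ (j:ℕ) ≤ 1), if_neg hj0, if_neg hj1]
    -- (3) bottom partition, no extra variable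
    have hP : schur (fun i : Fin (m'+1) => lam i.succ) U = Gd m' vv e0 (vv 1) := by
      rw [schur]
      show (Matrix.of fun i j : Fin (m'+1) =>
          hZ (m'+1) ((lam i.succ : ℤ) - (i:ℤ) + (j:ℤ)) U).det = Gd m' vv e0 (vv 1)
      have hb := det_border (m'+1) (fun j => vv ((j:ℕ)+1))
      have hm1 : (Matrix.of fun i j : Fin (m'+1) =>
            hZ (m'+1) ((lam i.succ : ℤ) - (i:ℤ) + (j:ℤ)) U)
          = (Matrix.of fun (i j : Fin (m'+1)) => vv ((j:ℕ)+1) i.succ) := by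
        funext i j
        have harg : (lam i.succ : ℤ) - (i:ℤ) + (j:ℤ) = ov i.succ + (((j:ℕ)+1 : ℕ):ℤ) := by
          rw [hov]
          simp only [Fin.val_succ]
          push_cast
          ring
        simp only [Matrix.of_apply]
        rw [harg]
      rw [hm1, ← hb]
      rw [show Gd m' vv e0 (vv 1) = (Gmat m' vv e0 (vv 1)).det from rfl]
      refine congrArg Matrix.det ?_
      funext i j
      induction j using Fin.cases with
      | zero =>
        simp only [Matrix.of_apply, Fin.cons_zero, Gmat, Fin.val_zero, he0]
        norm_num
        exact (congrFun (if_pos (rfl : (0:ℕ) = 0) (t := fun i' : Fin (m'+2) => if i' = 0 then (1:ℝ) else 0) (e := vv 0)) i).symm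
      | succ k =>
        simp only [Matrix.of_apply, Fin.cons_succ, Gmat, Fin.val_succ]
        rw [if_neg (show ¬((k:ℕ)+1 = 0) by omega)]
        by_cases hk : (k:ℕ) = 0
        · rw [if_pos (show ((k:ℕ)+1 = 1) by omega), hk]
        · rw [if_neg (show ¬((k:ℕ)+1 = 1) by omega)]
    -- (4) bottom partition with one extra variable
    have hgenP : ∀ z : ℝ, schur (fun i : Fin (m'+1) => lam i.succ) (Fin.snoc U z)
        = Gd m' vv e0 (fun i => hZ (m'+2) (ov i + 1) (Fin.snoc U z)) := by
      intro z
      rw [schur]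
      show (Matrix.of fun i j : Fin (m'+1) =>
          hZ (m'+2) ((lam i.succ : ℤ) - (i:ℤ) + (j:ℤ)) (Fin.snoc U z)).det
        = Gd m' vv e0 (fun i => hZ (m'+2) (ov i + 1) (Fin.snoc U z))
      have step1 := det_colstep (m'+1) 0 z
        (fun (j : Fin (m'+1)) i => hZ (m'+2) (ov i.succ + 1 + (j:ℕ)) (Fin.snoc U z))
        (fun (j : Fin (m'+1)) i => hZ (m'+1) (ov i.succ + 1 + (j:ℕ)) U)
        (by
          intro j hj
          funext i
          simp only []
          have harg : ov i.succ + 1 + (((j:ℕ):ℤ)) - 1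
              = ov i.succ + 1 + ((((j:ℕ) - 1 : ℕ)):ℤ) := by omega
          have hr := hZ_rec (m'+1) (ov i.succ + 1 + ((j:ℕ):ℤ)) U z
          rw [harg] at hr
          rw [hr])
      set w : Fin (m'+1) → Fin (m'+2) → ℝ := fun j =>
        if (j:ℕ) = 0 then (fun i => hZ (m'+2) (ov i + 1) (Fin.snoc U z))
        else vv ((j:ℕ)+1) with hw
      have hb := det_border (m'+1) w
      have hm1 : (Matrix.of fun i j : Fin (m'+1) =>
            hZ (m'+2) ((lam i.succ : ℤ) - (i:ℤ) + (j:ℤ)) (Fin.snoc U z))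
          = (Matrix.of fun i (j : Fin (m'+1)) =>
              (fun (j' : Fin (m'+1)) i' =>
                hZ (m'+2) (ov i'.succ + 1 + ((j':ℕ):ℤ)) (Fin.snoc U z)) j i) := by
        funext i j
        have harg : (lam i.succ : ℤ) - (i:ℤ) + (j:ℤ) = ov i.succ + 1 + ((j:ℕ):ℤ) := by
          rw [hov]
          simp only [Fin.val_succ]
          push_cast
          ring
        simp only [Matrix.of_apply]
        rw [harg]
      have hm2 : (Matrix.of fun i (j : Fin (m'+1)) =>
            if (j:ℕ) ≤ 0 then hZ (m'+2) (ov i.succ + 1 + ((j:ℕ):ℤ)) (Fin.snoc U z)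
            else hZ (m'+1) (ov i.succ + 1 + ((j:ℕ):ℤ)) U)
          = (Matrix.of fun (i j : Fin (m'+1)) => w j i.succ) := by
        funext i j
        simp only [Matrix.of_apply, hw]
        by_cases hj0 : (j:ℕ) = 0
        · rw [if_pos (by omega), if_pos hj0]
          norm_num [hj0]
        · rw [if_neg (by omega), if_neg hj0, hvv]
          have harg : ov i.succ + 1 + ((j:ℕ):ℤ) = ov i.succ + (((j:ℕ)+1 : ℕ):ℤ) := by
            push_cast
            ring
          rw [harg]
      rw [hm1, step1, hm2, ← hb]
      rw [show Gd m' vv e0 (fun i => hZ (m'+2) (ov i + 1) (Fin.snoc U z))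
          = (Gmat m' vv e0 (fun i => hZ (m'+2) (ov i + 1) (Fin.snoc U z))).det from rfl]
      refine congrArg Matrix.det ?_
      funext i j
      induction j using Fin.cases with
      | zero =>
        simp only [Matrix.of_apply, Fin.cons_zero, Gmat, Fin.val_zero, he0]
        norm_num
        exact (congrFun (if_pos (rfl : (0:ℕ) = 0) (t := fun i' : Fin (m'+2) => if i' = 0 then (1:ℝ) else 0) (e := vv 0)) i).symm
      | succ k =>
        simp only [Matrix.of_apply, Fin.cons_succ, Gmat, Fin.val_succ]
        rw [if_neg (show ¬((k:ℕ)+1 = 0) by omega)]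
        by_cases hk : (k:ℕ) = 0
        · rw [if_pos (show ((k:ℕ)+1 = 1) by omega), hw]
          simp only [if_pos hk]
        · rw [if_neg (show ¬((k:ℕ)+1 = 1) by omega), hw]
          simp only [if_neg hk]
    -- pointwise column identities
    have hc1z : ∀ z : ℝ, (fun i => hZ (m'+2) (ov i + 1) (Fin.snoc U z))
        = vv 1 + z • (fun i => hZ (m'+2) (ov i) (Fin.snoc U z)) := by
      intro z
      funext i
      have hr := hZ_rec (m'+1) (ov i + 1) U z
      have harg : ov i + 1 - 1 = ov i := by ring
      rw [harg] at hr
      simp only [Pi.add_apply, Pi.smul_apply, smul_eq_mul, hvv]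
      rw [hr]
      norm_num
    have hcross : (x - y) • cXY = x • cX + (-y) • cY := by
      funext i
      simp only [Pi.add_apply, Pi.smul_apply, smul_eq_mul, hcXY, hcX, hcY]
      have hc := hZ_cross (m'+1) (ov i) U x y
      linarith
    -- main algebraic identities
    have eA : schur lam (Fin.snoc U x) = Gd m' vv cX (vv 1) := by
      rw [hgenA x, ← hcX]
    have eB : schur lam (Fin.snoc U y) = Gd m' vv cY (vv 1) := by
      rw [hgenA y, ← hcY]
    have ePx : schur (fun i : Fin (m'+1) => lam i.succ) (Fin.snoc U x)
        = Gd m' vv e0 (vv 1) + x * Gd m' vv e0 cX := by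
      rw [hgenP x, hc1z x, Gd_add_right, Gd_smul_right, ← hcX]
    have ePy : schur (fun i : Fin (m'+1) => lam i.succ) (Fin.snoc U y)
        = Gd m' vv e0 (vv 1) + y * Gd m' vv e0 cY := by
      rw [hgenP y, hc1z y, Gd_add_right, Gd_smul_right, ← hcY]
    have eXY : (x - y) * schur lam
          (Fin.snoc (Fin.snoc U x : Fin (m'+1+1) → ℝ) y : Fin (m'+1+2) → ℝ)
        = x * Gd m' vv cX (vv 1) - y * Gd m' vv cY (vv 1) + x * y * Gd m' vv cX cY := by
      rw [hXY]
      have h1 : (x - y) * Gd m' vv cXY c1X = Gd m' vv ((x - y) • cXY) c1X :=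
        (Gd_smul_left m' vv (x - y) cXY c1X).symm
      rw [h1, hcross, Gd_add_left, Gd_smul_left, Gd_smul_left]
      have hc1Xv : c1X = vv 1 + x • cX := by
        rw [hc1X, hc1z x, ← hcX]
      have hX1 : Gd m' vv cX c1X = Gd m' vv cX (vv 1) := by
        rw [hc1Xv, Gd_add_right, Gd_smul_right, Gd_alt]
        ring
      have hY1 : Gd m' vv cY c1X = Gd m' vv cY (vv 1) - x * Gd m' vv cX cY := by
        rw [hc1Xv, Gd_add_right, Gd_smul_right, Gd_swap m' vv cY cX]
        ring
      rw [hX1, hY1]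
      ring
    have ePl := Gd_pluecker m' vv e0 (vv 1) cX cY
    rw [Gd_swap m' vv (vv 1) cY, Gd_swap m' vv (vv 1) cX] at ePl
    rw [eA, eB, hP, ePx, ePy]
    linear_combination (Gd m' vv e0 (vv 1)) * eXY + (x*y) * ePl
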